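/- arXiv:2211.08677 — 2 statements merged into one kernel-verified Lean document; each statement's English description precedes it below -/
import Mathlib

section
/- Let C ⊆ ℝⁿ and let I ⊆ {1,…,n} be nonempty with π(C) unbounded. Then the Clarke tangent cone at infinity T_C(∞_I) is a closed convex cone in ℝⁿ containing the origin 0. -/
open Filter Topology Metric Set Bornology
open scoped InnerProductSpace Pointwise

noncomputable section

/-- Euclidean `n`-space. -/
abbrev En (n : ℕ) : Type := EuclideanSpace ℝ (Fin n)

/-- The Clarke tangent cone at infinity of `C ⊆ E`, where "going to infinity" is
measured by `‖p x‖ → ∞` for a projection map `p`:  `v` belongs to the cone iff for all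
sequences `x k ∈ C` with `‖p (x k)‖ → ∞` and all positive sequences `t k → 0` there is a
sequence `w k → v` with `x k + t k • w k ∈ C` for all `k`. -/
def tangentConeAtInfty {E F : Type*} [NormedAddCommGroup E] [NormedSpace ℝ E] [Norm F]
    (p : E → F) (C : Set E) : Set E :=
  {v | ∀ (x : ℕ → E) (t : ℕ → ℝ), (∀ k, x k ∈ C) →
      Tendsto (fun k => ‖p (x k)‖) atTop atTop →
      (∀ k, 0 < t k) → Tendsto t atTop (𝓝 0) →
      ∃ w : ℕ → E, Tendsto w atTop (𝓝 v) ∧ ∀ k, x k + t k • w k ∈ C}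

/-- Projection of `ℝⁿ` onto the coordinates indexed by `I`. -/
def proj {n : ℕ} (I : Finset (Fin n)) (x : En n) : EuclideanSpace ℝ ↥I := WithLp.toLp 2 (fun i : ↥I => x i)

lemma proj_add {n : ℕ} (I : Finset (Fin n)) (a b : En n) :
    proj I (a + b) = proj I a + proj I b := rfl

lemma proj_smul {n : ℕ} (I : Finset (Fin n)) (c : ℝ) (a : En n) :
    proj I (c • a) = c • proj I a := rfl

lemma norm_proj_le {n : ℕ} (I : Finset (Fin n)) (x : En n) : ‖proj I x‖ ≤ ‖x‖ := by
  rw [EuclideanSpace.norm_eq, EuclideanSpace.norm_eq]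
  apply Real.sqrt_le_sqrt
  have : ∑ i : ↥I, ‖proj I x i‖ ^ 2 = ∑ i ∈ I, ‖x i‖ ^ 2 := by
    rw [← Finset.sum_coe_sort I (fun i => ‖x i‖ ^ 2)]
    rfl
  rw [this]
  exact Finset.sum_le_sum_of_subset_of_nonneg (Finset.subset_univ I)
    (fun i _ _ => by positivity)

lemma zero_mem_tc {E F : Type*} [NormedAddCommGroup E] [NormedSpace ℝ E] [Norm F]
    (p : E → F) (C : Set E) : (0 : E) ∈ tangentConeAtInfty p C := by
  intro x t hx _ _ _
  exact ⟨fun _ => 0, tendsto_const_nhds, fun k => by simpa using hx k⟩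

lemma smul_mem_tc {E F : Type*} [NormedAddCommGroup E] [NormedSpace ℝ E] [Norm F]
    {p : E → F} {C : Set E} {v : E} (hv : v ∈ tangentConeAtInfty p C)
    {c : ℝ} (hc : 0 ≤ c) : c • v ∈ tangentConeAtInfty p C := by
  rcases hc.eq_or_lt with h | h
  · rw [← h, zero_smul]; exact zero_mem_tc p C
  · intro x t hx hpx htpos ht0
    obtain ⟨w, hw, hwmem⟩ := hv x (fun k => c * t k) hx hpx
      (fun k => mul_pos h (htpos k)) (by simpa using ht0.const_mul c)
    refine ⟨fun k => c • w k, hw.const_smul c, fun k => ?_⟩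
    have := hwmem k
    show x k + t k • (c • w k) ∈ C
    rw [smul_smul, mul_comm (t k) c]
    exact this

lemma add_mem_tc {n : ℕ} {I : Finset (Fin n)} {C : Set (En n)} {u v : En n}
    (hu : u ∈ tangentConeAtInfty (proj I) C) (hv : v ∈ tangentConeAtInfty (proj I) C) :
    u + v ∈ tangentConeAtInfty (proj I) C := by
  intro x t hx hpx htpos ht0
  obtain ⟨w, hw, hwmem⟩ := hu x t hx hpx htpos ht0
  -- the new sequence
  set y : ℕ → En n := fun k => x k + t k • w k with hy
  have hpy : Tendsto (fun k => ‖proj I (y k)‖) atTop atTop := by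
    have hbnd : Tendsto (fun k => ‖t k • w k‖) atTop (𝓝 ‖(0:ℝ) • u‖) :=
      (ht0.smul hw).norm
    rw [zero_smul, norm_zero] at hbnd
    have key : ∀ k, ‖proj I (x k)‖ - ‖t k • w k‖ ≤ ‖proj I (y k)‖ := by
      intro k
      have h1 : ‖proj I (x k)‖ ≤ ‖proj I (y k)‖ + ‖proj I (t k • w k)‖ := by
        have : proj I (x k) = proj I (y k) - proj I (t k • w k) := by
          rw [hy]; simp [proj_add]
        rw [this]
        exact norm_sub_le _ _
      have h2 : ‖proj I (t k • w k)‖ ≤ ‖t k • w k‖ := norm_proj_le _ _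
      linarith
    have hev : ∀ᶠ k in atTop, (-1 : ℝ) ≤ -‖t k • w k‖ := by
      filter_upwards [hbnd.eventually_lt_const one_pos] with k hk
      linarith
    have hdiff : Tendsto (fun k => ‖proj I (x k)‖ + -‖t k • w k‖) atTop atTop :=
      tendsto_atTop_add_right_of_le' atTop (-1) hpx hev
    exact tendsto_atTop_mono (fun k => by have := key k; linarith) hdiff
  obtain ⟨z, hz, hzmem⟩ := hv y t (fun k => hwmem k) hpy htpos ht0
  refine ⟨fun k => w k + z k, hw.add hz, fun k => ?_⟩
  have := hzmem k
  show x k + t k • (w k + z k) ∈ C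
  rw [smul_add, ← add_assoc]
  exact this

lemma isClosed_tc {n : ℕ} {I : Finset (Fin n)} {C : Set (En n)} :
    IsClosed (tangentConeAtInfty (proj I) C) := by
  apply IsSeqClosed.isClosed
  intro vs v hvs hlim x t hx hpx htpos ht0
  choose w hw hwmem using fun m => hvs m x t hx hpx htpos ht0
  have hN : ∀ m : ℕ, ∃ N, ∀ k ≥ N, ‖w m k - vs m‖ < 1 / (m + 1) := by
    intro m
    have h2 : ∀ᶠ k in atTop, ‖w m k - vs m‖ < 1 / (m + 1) := by
      have h3 := Metric.tendsto_atTop.mp (hw m) (1 / (m + 1)) (by positivity)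
      obtain ⟨N, hN⟩ := h3
      exact eventually_atTop.mpr ⟨N, fun k hk => by
        simpa [dist_eq_norm] using hN k hk⟩
    exact eventually_atTop.mp h2
  choose N hNs using hN
  classical
  set φ : ℕ → ℕ := fun k => Nat.findGreatest (fun m => N m ≤ k) k with hφ
  have hφ_top : Tendsto φ atTop atTop := by
    apply tendsto_atTop_atTop.mpr
    intro b
    refine ⟨max b (N b), fun k hk => ?_⟩
    exact Nat.le_findGreatest (le_trans (le_max_left _ _) hk)
      (le_trans (le_max_right _ _) hk)
  refine ⟨fun k => w (φ k) k, ?_, fun k => hwmem (φ k) k⟩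
  rw [tendsto_iff_norm_sub_tendsto_zero]
  apply squeeze_zero' (Eventually.of_forall fun k => norm_nonneg _)
  · show ∀ᶠ k in atTop, ‖w (φ k) k - v‖ ≤ 1 / (φ k + 1) + ‖vs (φ k) - v‖
    filter_upwards [eventually_ge_atTop (N 0)] with k hk
    have hspec : N (φ k) ≤ k :=
      Nat.findGreatest_spec (P := fun m => N m ≤ k) (Nat.zero_le k) hk
    have h1 : ‖w (φ k) k - vs (φ k)‖ < 1 / (φ k + 1) := hNs (φ k) k hspec
    calc ‖w (φ k) k - v‖ ≤ ‖w (φ k) k - vs (φ k)‖ + ‖vs (φ k) - v‖ :=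
          norm_sub_le_norm_sub_add_norm_sub _ _ _
      _ ≤ 1 / (φ k + 1) + ‖vs (φ k) - v‖ := by linarith
  · have h1 : Tendsto (fun k => 1 / ((φ k : ℝ) + 1)) atTop (𝓝 0) :=
      (tendsto_one_div_add_atTop_nhds_zero_nat).comp hφ_top
    have h2 : Tendsto (fun k => ‖vs (φ k) - v‖) atTop (𝓝 0) := by
      have := (tendsto_iff_norm_sub_tendsto_zero.mp hlim).comp hφ_top
      exact this
    simpa using h1.add h2

/-- Corollary 3.5: the Clarke tangent cone at infinity is a closed convex cone
containing the origin. -/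
theorem stmt1 (n : ℕ) (C : Set (En n)) (I : Finset (Fin n)) (hI : I.Nonempty)
    (hunb : ¬ IsBounded (proj I '' C)) :
    IsClosed (tangentConeAtInfty (proj I) C) ∧
    Convex ℝ (tangentConeAtInfty (proj I) C) ∧
    (∀ v ∈ tangentConeAtInfty (proj I) C, ∀ c : ℝ, 0 ≤ c →
      c • v ∈ tangentConeAtInfty (proj I) C) ∧
    (0 : En n) ∈ tangentConeAtInfty (proj I) C := by
  refine ⟨isClosed_tc, ?_, fun v hv c hc => smul_mem_tc hv hc, zero_mem_tc _ _⟩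
  intro u hu v hv a b ha hb _
  exact add_mem_tc (smul_mem_tc hu ha) (smul_mem_tc hv hb)
end
end

section
/- Let C ⊆ ℝⁿ be nonempty and let I ⊆ {1,…,n} be nonempty with π(C) unbounded, and let d_C(x) := inf_{y ∈ C} ‖x − y‖ be the distance function to C. Then a vector v ∈ ℝⁿ belongs to T_C(∞_I) if and only if for every sequence x_k ∈ ℝⁿ with ‖π(x_k)‖ → ∞ and d_C(x_k) → 0 and every sequence of positive reals t_k → 0, one has limsup_{k→∞} (d_C(x_k + t_k v) − d_C(x_k))/t_k ≤ 0 (equivalently, the limsup of (d_C(x + t v) − d_C(x))/t as ‖π(x)‖ → ∞, d_C(x) → 0 and t ↓ 0 equals 0). -/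
open Filter Topology Metric Set Bornology
open scoped InnerProductSpace Pointwise

noncomputable section

/-- Proposition 3.9: analytic characterization of the Clarke tangent cone at infinity
via the distance function `d_C`. -/
theorem stmt4 (n : ℕ) (C : Set (En n)) (I : Finset (Fin n)) (hI : I.Nonempty)
    (hCne : C.Nonempty) (hunb : ¬ IsBounded (proj I '' C)) (v : En n) :
    v ∈ tangentConeAtInfty (proj I) C ↔
      ∀ (x : ℕ → En n) (t : ℕ → ℝ),
        Tendsto (fun k => ‖proj I (x k)‖) atTop atTop →
        Tendsto (fun k => Metric.infDist (x k) C) atTop (𝓝 0) →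
        (∀ k, 0 < t k) → Tendsto t atTop (𝓝 0) →
        Filter.limsup
          (fun k => (Metric.infDist (x k + t k • v) C - Metric.infDist (x k) C) / t k)
          atTop ≤ 0 := by
  constructor
  · intro hv x t hx hd ht ht0
    -- choose near-minimizers y k ∈ C
    have hchoice : ∀ k, ∃ y ∈ C, dist (x k) y < infDist (x k) C + t k * t k := by
      intro k
      exact (infDist_lt_iff hCne).1 (by nlinarith [ht k, infDist_nonneg (x := x k) (s := C)])
    choose y hyC hyd using hchoice
    -- ‖proj (y k)‖ → ∞
    have hxy : ∀ k, ‖x k - y k‖ < infDist (x k) C + t k * t k := by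
      intro k; rw [← dist_eq_norm]; exact hyd k
    have hpy : Tendsto (fun k => ‖proj I (y k)‖) atTop atTop := by
      have hlow : ∀ k, ‖proj I (x k)‖ - (infDist (x k) C + t k * t k) ≤ ‖proj I (y k)‖ := by
        intro k
        have h1 : ‖proj I (x k)‖ - ‖proj I (y k)‖ ≤ ‖proj I (x k) - proj I (y k)‖ :=
          norm_sub_norm_le _ _
        have h2 : ‖proj I (x k) - proj I (y k)‖ ≤ ‖x k - y k‖ := by
          have e : proj I (x k) - proj I (y k) = proj I (x k - y k) := by ext i; simp [proj]
          rw [e]; exact norm_proj_le I (x k - y k)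
        nlinarith [hxy k]
      have hev : ∀ᶠ k in atTop, infDist (x k) C + t k * t k ≤ 1 := by
        have := (hd.add (ht0.mul ht0)).eventually_le_const (by norm_num : (0:ℝ)+0*0 < 1)
        simpa using this
      have hev2 : ∀ᶠ k in atTop, ‖proj I (x k)‖ + (-1) ≤ ‖proj I (y k)‖ := by
        filter_upwards [hev] with k hk
        linarith [hlow k, hk]
      exact tendsto_atTop_mono' atTop hev2 (tendsto_atTop_add_const_right atTop (-1) hx)
    obtain ⟨w, hwv, hwC⟩ := hv y t hyC hpy ht ht0
    -- bound the difference quotient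
    have hub : ∀ k, (infDist (x k + t k • v) C - infDist (x k) C) / t k ≤ t k + ‖v - w k‖ := by
      intro k
      rw [div_le_iff₀ (ht k)]
      have h1 : infDist (x k + t k • v) C ≤ dist (x k + t k • v) (y k + t k • w k) :=
        infDist_le_dist_of_mem (hwC k)
      have h2 : dist (x k + t k • v) (y k + t k • w k) ≤ ‖x k - y k‖ + t k * ‖v - w k‖ := by
        rw [dist_eq_norm]
        have : x k + t k • v - (y k + t k • w k) = (x k - y k) + t k • (v - w k) := by
          rw [smul_sub]; abel
        rw [this]
        calc ‖(x k - y k) + t k • (v - w k)‖ ≤ ‖x k - y k‖ + ‖t k • (v - w k)‖ := norm_add_le _ _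
          _ = ‖x k - y k‖ + t k * ‖v - w k‖ := by
              rw [norm_smul, Real.norm_eq_abs, abs_of_pos (ht k)]
      nlinarith [hxy k]
    have hlb : ∀ k, -‖v‖ ≤ (infDist (x k + t k • v) C - infDist (x k) C) / t k := by
      intro k
      rw [le_div_iff₀ (ht k)]
      have := infDist_le_infDist_add_dist (x := x k) (y := x k + t k • v) (s := C)
      have hdist : dist (x k) (x k + t k • v) = t k * ‖v‖ := by
        rw [dist_eq_norm]
        simp [norm_smul, Real.norm_eq_abs, abs_of_pos (ht k)]
      nlinarith [this, norm_nonneg v, (ht k).le]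
    have hg : Tendsto (fun k => t k + ‖v - w k‖) atTop (𝓝 0) := by
      have : Tendsto (fun k => ‖v - w k‖) atTop (𝓝 0) := by
        have := (tendsto_const_nhds (x := v)).sub hwv
        simpa using this.norm
      simpa using ht0.add this
    calc limsup (fun k => (infDist (x k + t k • v) C - infDist (x k) C) / t k) atTop
        ≤ limsup (fun k => t k + ‖v - w k‖) atTop := by
          have hb : IsBoundedUnder (· ≥ ·) atTop
              (fun k => (infDist (x k + t k • v) C - infDist (x k) C) / t k) :=
            isBoundedUnder_of ⟨-‖v‖, fun k => hlb k⟩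
          exact limsup_le_limsup (Eventually.of_forall hub)
            hb.isCoboundedUnder_le hg.isBoundedUnder_le
      _ = 0 := hg.limsup_eq
  · intro h x t hxC hx ht ht0
    -- the difference quotient q k := infDist (x k + t k • v) C / t k tends to 0
    have hdx : ∀ k, infDist (x k) C = 0 := fun k => infDist_zero_of_mem (hxC k)
    set q : ℕ → ℝ := fun k => infDist (x k + t k • v) C / t k with hq
    have hq0 : ∀ k, 0 ≤ q k := fun k =>
      div_nonneg infDist_nonneg (ht k).le
    have hqub : ∀ k, q k ≤ ‖v‖ := by
      intro k
      rw [hq]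
      rw [div_le_iff₀ (ht k)]
      have h1 : infDist (x k + t k • v) C ≤ dist (x k + t k • v) (x k) :=
        infDist_le_dist_of_mem (hxC k)
      have : dist (x k + t k • v) (x k) = t k * ‖v‖ := by
        rw [dist_eq_norm]
        simp [norm_smul, Real.norm_eq_abs, abs_of_pos (ht k)]
      linarith [h1, this.le, this.ge]
    have hlim : limsup q atTop ≤ 0 := by
      have := h x t hx (by simpa [funext hdx] using tendsto_const_nhds) ht ht0
      simpa [hq, hdx] using this
    have hqtend : Tendsto q atTop (𝓝 0) := by
      exact tendsto_of_le_liminf_of_limsup_le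
        (le_liminf_of_le ((isBoundedUnder_of ⟨‖v‖, hqub⟩).isCoboundedUnder_ge)
          (Eventually.of_forall hq0))
        hlim (isBoundedUnder_of ⟨‖v‖, hqub⟩) (isBoundedUnder_of ⟨0, hq0⟩)
    -- choose z k ∈ C near x k + t k • v
    have hchoice : ∀ k, ∃ z ∈ C, dist (x k + t k • v) z < infDist (x k + t k • v) C + t k * t k := by
      intro k
      exact (infDist_lt_iff hCne).1
        (by nlinarith [ht k, infDist_nonneg (x := x k + t k • v) (s := C)])
    choose z hzC hzd using hchoice
    refine ⟨fun k => (t k)⁻¹ • (z k - x k), ?_, ?_⟩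
    · rw [tendsto_iff_dist_tendsto_zero]
      apply squeeze_zero (fun k => dist_nonneg) (g := fun k => q k + t k)
      · intro k
        have htne : t k ≠ 0 := (ht k).ne'
        have heq : (t k)⁻¹ • (z k - x k) - v = (t k)⁻¹ • (z k - (x k + t k • v)) := by
          rw [smul_sub, smul_sub, smul_add, smul_smul, inv_mul_cancel₀ htne, one_smul]; abel
        have hnorm : ‖z k - (x k + t k • v)‖ = dist (x k + t k • v) (z k) :=
          (dist_eq_norm' _ _).symm
        rw [dist_eq_norm, heq, norm_smul, Real.norm_eq_abs,
          abs_of_pos (inv_pos.2 (ht k)), hnorm]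
        have hbd : dist (x k + t k • v) (z k) ≤ infDist (x k + t k • v) C + t k * t k :=
          (hzd k).le
        calc (t k)⁻¹ * dist (x k + t k • v) (z k)
            ≤ (t k)⁻¹ * (infDist (x k + t k • v) C + t k * t k) :=
              mul_le_mul_of_nonneg_left hbd (inv_pos.2 (ht k)).le
          _ = q k + t k := by
              show _ = infDist (x k + t k • v) C / t k + t k
              field_simp
      · simpa using hqtend.add ht0
    · intro k
      have htne : t k ≠ 0 := (ht k).ne'
      have : x k + t k • ((t k)⁻¹ • (z k - x k)) = z k := by
        rw [smul_smul, mul_inv_cancel₀ htne, one_smul]; abel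
      rw [this]; exact hzC k
end
end
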